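/- Let M be the closed subspace of H ⊕ ℂ spanned by (ξ, 0) and (0, 1) (i.e. M = ⟨ξ⟩ ⊕ ℂ). Then M and its orthogonal complement M⊥ are both invariant under T if and only if there exists r ∈ ℂ with |r| = 1 and U ξ = r·ξ; in that case T restricted to M⊥ coincides with the action of U on the orthogonal complement of ξ in H. -/

import Mathlib

open scoped InnerProductSpace

noncomputable section

variable {H : Type*} [NormedAddCommGroup H] [InnerProductSpace ℂ H]

/-- The vector `(x, z)` of the Hilbert space direct sum `H ⊕ ℂ`. -/
def mkE (x : H) (z : ℂ) : WithLp 2 (H × ℂ) := (WithLp.equiv 2 (H × ℂ)).symm (x, z)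

/-- The subspace `⟨ξ⟩ ⊕ ℂ` of `H ⊕ ℂ`, spanned by `(ξ,0)` and `(0,1)`. -/
def spanXiC (ξ : H) : Submodule ℂ (WithLp 2 (H × ℂ)) :=
  Submodule.span ℂ ({mkE ξ 0, mkE 0 1} : Set (WithLp 2 (H × ℂ)))

lemma mkE_smul_add (x x' : H) (z z' : ℂ) (m n : ℂ) :
    m • mkE x z + n • mkE x' z' = mkE (m • x + n • x') (m * z + n * z') := rfl

lemma mkE_eta (v : WithLp 2 (H × ℂ)) : v = mkE v.ofLp.1 v.ofLp.2 := rfl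

lemma inner_mkE (x x' : H) (z z' : ℂ) :
    ⟪mkE x z, mkE x' z'⟫_ℂ = ⟪x, x'⟫_ℂ + (starRingEnd ℂ) z * z' := by
  simp [mkE, WithLp.prod_inner_apply, RCLike.inner_apply]
  ring

lemma mkE_mem_spanXiC (ξ : H) (m n : ℂ) : mkE (m • ξ) n ∈ spanXiC ξ := by
  rw [spanXiC, Submodule.mem_span_pair]
  exact ⟨m, n, by rw [mkE_smul_add]; simp⟩

/-- With `ξ ≠ 0`, `a = √(1 + ‖ξ‖²)`, `A x = x + ((a−1)/‖ξ‖²)·⟨x,ξ⟩·ξ`, `U` unitary, and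
`T(x,z) = (U(A x) + z·U ξ, ⟨x,ξ⟩ + a·z)`: the subspace `M = ⟨ξ⟩ ⊕ ℂ` and its orthogonal
complement are both invariant under `T` iff `U ξ = r·ξ` for some `r` with `|r| = 1`; and in
that case `T` restricted to `Mᗮ` is the action of `U` on `⟨ξ⟩ᗮ ⊆ H`.
(The paper's inner product `⟨x,y⟩` is linear in the first slot, i.e. `⟪y,x⟫_ℂ` in Mathlib's
convention.) -/
theorem stmt6 [CompleteSpace H]
    (ξ : H) (hξ : ξ ≠ 0) (a : ℝ) (ha : a = Real.sqrt (1 + ‖ξ‖ ^ 2))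
    (A : H →L[ℂ] H)
    (hA : ∀ x : H, A x = x + ((((a - 1) / ‖ξ‖ ^ 2 : ℝ) : ℂ) * ⟪ξ, x⟫_ℂ) • ξ)
    (U : H →L[ℂ] H) (hU : U ∈ unitary (H →L[ℂ] H))
    (T : WithLp 2 (H × ℂ) →L[ℂ] WithLp 2 (H × ℂ))
    (hT : ∀ (x : H) (z : ℂ),
      T (mkE x z) = mkE (U (A x) + z • U ξ) (⟪ξ, x⟫_ℂ + (a : ℂ) * z)) :
    (((∀ v ∈ spanXiC ξ, T v ∈ spanXiC ξ) ∧ ∀ v ∈ (spanXiC ξ)ᗮ, T v ∈ (spanXiC ξ)ᗮ) ↔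
        ∃ r : ℂ, ‖r‖ = 1 ∧ U ξ = r • ξ) ∧
      ((∃ r : ℂ, ‖r‖ = 1 ∧ U ξ = r • ξ) →
        ∀ y : H, ⟪ξ, y⟫_ℂ = 0 → T (mkE y 0) = mkE (U y) 0) := by
  have hnorm : (‖ξ‖ : ℂ) ^ 2 ≠ 0 := by
    simp [pow_eq_zero_iff, norm_eq_zero, hξ]
  have hA0 : A 0 = 0 := map_zero A
  -- A ξ = a • ξ
  have hAξ : A ξ = (a : ℂ) • ξ := by
    rw [hA ξ, inner_self_eq_norm_sq_to_K]
    have h0 : (‖ξ‖ : ℂ) ≠ 0 := by simpa using norm_ne_zero_iff.mpr hξ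
    match_scalars
    push_cast
    field_simp
    simp only [RCLike.ofReal_eq_complex_ofReal]
    ring
  -- T on generators
  have hT01 : T (mkE 0 1) = mkE (U ξ) (a : ℂ) := by
    rw [hT 0 1, hA0, map_zero]
    simp
  have hTξ0 : T (mkE ξ 0) = mkE ((a : ℂ) • U ξ) ((‖ξ‖ : ℂ) ^ 2) := by
    rw [hT ξ 0, hAξ, inner_self_eq_norm_sq_to_K]
    simp [map_smul]
  -- second part: action on vectors orthogonal to ξ
  have hres : ∀ y : H, ⟪ξ, y⟫_ℂ = 0 → T (mkE y 0) = mkE (U y) 0 := by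
    intro y hy
    have hAy : A y = y := by rw [hA y, hy]; simp
    rw [hT y 0, hAy, hy]
    simp
  refine ⟨⟨fun ⟨h1, _⟩ => ?_, fun ⟨r, hr, hUξ⟩ => ?_⟩, fun _ => hres⟩
  · -- forward direction
    have hmem : T (mkE 0 1) ∈ spanXiC ξ := by
      apply h1
      exact Submodule.subset_span (by simp)
    rw [hT01, spanXiC, Submodule.mem_span_pair] at hmem
    obtain ⟨m, n, hmn⟩ := hmem
    rw [mkE_smul_add] at hmn
    simp only [smul_zero, add_zero, mul_one, mul_zero, zero_add] at hmn
    have h1' : m • ξ = U ξ := congrArg (fun w => w.ofLp.1) hmn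
    refine ⟨m, ?_, h1'.symm⟩
    have hUn : ‖U ξ‖ = ‖ξ‖ := U.norm_map_of_mem_unitary hU ξ
    have : ‖m‖ * ‖ξ‖ = ‖ξ‖ := by rw [← norm_smul, h1', hUn]
    have hξn : ‖ξ‖ ≠ 0 := norm_ne_zero_iff.mpr hξ
    field_simp at this
    exact this
  · -- backward direction
    have hr0 : r ≠ 0 := by rintro rfl; simp at hr
    constructor
    · intro v hv
      induction hv using Submodule.span_induction with
      | mem x hx =>
        rcases hx with hx | hx
        · subst hx
          rw [hTξ0, hUξ, smul_smul]
          exact mkE_mem_spanXiC ξ _ _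
        · simp only [Set.mem_singleton_iff] at hx
          subst hx
          rw [hT01, hUξ]
          exact mkE_mem_spanXiC ξ _ _
      | zero => simp only [map_zero]; exact Submodule.zero_mem _
      | add x y _ _ hx hy => rw [map_add]; exact Submodule.add_mem _ hx hy
      | smul c x _ hx => rw [map_smul]; exact Submodule.smul_mem _ _ hx
    · intro v hv
      have hv1 : ⟪ξ, v.ofLp.1⟫_ℂ = 0 := by
        have := hv (mkE ξ 0) (Submodule.subset_span (by simp))
        rw [mkE_eta v, inner_mkE] at this
        simpa using this
      have hv2 : v.ofLp.2 = 0 := by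
        have := hv (mkE 0 1) (Submodule.subset_span (by simp))
        rw [mkE_eta v, inner_mkE] at this
        simpa using this
      have hvE : v = mkE v.ofLp.1 0 := by rw [← hv2]; exact mkE_eta v
      have hTv : T v = mkE (U v.ofLp.1) 0 := by rw [hvE]; exact hres v.ofLp.1 hv1
      have hinner : ⟪ξ, U v.ofLp.1⟫_ℂ = 0 := by
        have h2 : ⟪U ξ, U v.ofLp.1⟫_ℂ = ⟪ξ, v.ofLp.1⟫_ℂ := U.inner_map_map_of_mem_unitary hU ξ v.ofLp.1
        rw [hUξ, inner_smul_left, hv1] at h2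
        have := mul_eq_zero.mp h2
        rcases this with h | h
        · exact absurd h (by simpa using hr0)
        · exact h
      intro u hu
      induction hu using Submodule.span_induction with
      | mem x hx =>
        rcases hx with hx | hx
        · subst hx; rw [hTv, inner_mkE]; simpa using hinner
        · simp only [Set.mem_singleton_iff] at hx
          subst hx; rw [hTv, inner_mkE]; simp
      | zero => exact inner_zero_left _
      | add x y _ _ hx hy => rw [inner_add_left, hx, hy, add_zero]
      | smul c x _ hx => rw [inner_smul_left, hx, mul_zero]

end
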